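/- arXiv:2506.14279 — 2 statements merged into one kernel-verified Lean document; each statement's English description precedes it below -/
import Mathlib

section
/- Let G be an abelian group, G₀ ⊆ G a subset, and H = B±(G₀). If D(H) is finite, then every element of the set of minimal distances Δ*(H) is at most D(H) − 2; that is, max Δ*(H) ≤ D(H) − 2. -/
open Multiset

variable {G : Type*} [AddCommGroup G]

/-- `S` is a plus-minus weighted zero-sum sequence: `S` splits as `S₁ + S₂` with
`S₁.sum = S₂.sum`, i.e. some choice of signs `ε_i ∈ {+1, -1}` makes the weighted sum vanish. -/
def IsPMZeroSum (S : Multiset G) : Prop :=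
  ∃ S₁ S₂ : Multiset G, S = S₁ + S₂ ∧ S₁.sum = S₂.sum

/-- The monoid `B±(G₀)` of plus-minus weighted zero-sum sequences over `G₀ ⊆ G`, as an
additive submonoid of the free commutative monoid `Multiset G` of sequences over `G`. -/
def PMZS (G₀ : Set G) : AddSubmonoid (Multiset G) where
  carrier := {S | (∀ g ∈ S, g ∈ G₀) ∧ IsPMZeroSum S}
  zero_mem' := ⟨fun g hg => absurd hg (Multiset.notMem_zero g), 0, 0, by simp, rfl⟩
  add_mem' := by
    rintro S T ⟨hS, S₁, S₂, rfl, h12⟩ ⟨hT, T₁, T₂, rfl, h34⟩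
    exact ⟨fun g hg => (Multiset.mem_add.mp hg).elim (fun h => hS g h) (fun h => hT g h),
      S₁ + T₁, S₂ + T₂, add_add_add_comm S₁ S₂ T₁ T₂, by simp [h12, h34]⟩

/-- `A` is an atom (irreducible element) of the submonoid `H` of `Multiset G`. -/
def IsPMAtom (H : AddSubmonoid (Multiset G)) (A : Multiset G) : Prop :=
  A ∈ H ∧ A ≠ 0 ∧ ∀ B C : Multiset G, B ∈ H → C ∈ H → A = B + C → B = 0 ∨ C = 0

/-- The set of lengths `L(a)` of `a` in `H`: all `k` such that `a` is a sum of `k` atoms of `H`. -/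
def LengthSet (H : AddSubmonoid (Multiset G)) (a : Multiset G) : Set ℕ :=
  {k | ∃ l : List (Multiset G), (∀ A ∈ l, IsPMAtom H A) ∧ l.sum = a ∧ l.length = k}

/-- The set of successive distances `Δ(L)` of a set `L ⊆ ℕ`. -/
def DistSet (L : Set ℕ) : Set ℕ :=
  {d | 0 < d ∧ ∃ a ∈ L, a + d ∈ L ∧ ∀ b ∈ L, a < b → a + d ≤ b}

/-- The set of distances `Δ(H) = ⋃_{a ∈ H} Δ(L(a))`. -/
def DeltaM (H : AddSubmonoid (Multiset G)) : Set ℕ :=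
  {d | ∃ a ∈ H, d ∈ DistSet (LengthSet H a)}

/-- `a` divides `b` in `H`. -/
def DvdIn (H : AddSubmonoid (Multiset G)) (a b : Multiset G) : Prop :=
  ∃ c ∈ H, b = a + c

/-- `S` is a divisor-closed submonoid of `H`. -/
def IsDivClosed (H S : AddSubmonoid (Multiset G)) : Prop :=
  S ≤ H ∧ ∀ s ∈ S, ∀ a ∈ H, DvdIn H a s → a ∈ S

/-- The set of minimal distances
`Δ*(H) = {min Δ(S) : S a divisor-closed submonoid of H with Δ(S) ≠ ∅}`. -/
def DeltaStar (H : AddSubmonoid (Multiset G)) : Set ℕ :=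
  {d | ∃ S : AddSubmonoid (Multiset G), IsDivClosed H S ∧ (DeltaM S).Nonempty ∧ d = sInf (DeltaM S)}

/-- The set of lengths of atoms of `H`. -/
def AtomLengths (H : AddSubmonoid (Multiset G)) : Set ℕ :=
  {n | ∃ A : Multiset G, IsPMAtom H A ∧ Multiset.card A = n}

/-- The Davenport constant `D(H)` of `H`: the supremum of the lengths of the atoms of `H`.  -/
noncomputable def DavD (H : AddSubmonoid (Multiset G)) : ℕ :=
  sSup (AtomLengths H)

/-- The system of sets of lengths `L(H)` of `H`. -/
def LSys (H : AddSubmonoid (Multiset G)) : Set (Set ℕ) :=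
  {L | ∃ a ∈ H, L = LengthSet H a}

/-- `d` is the greatest common divisor of the set `S` of integers. -/
def IsSetGCD (S : Set ℤ) (d : ℕ) : Prop :=
  (∀ x ∈ S, (d : ℤ) ∣ x) ∧ ∀ c : ℕ, (∀ x ∈ S, (c : ℤ) ∣ x) → c ∣ d

/-- A family `e` of elements of an abelian group is independent if `∑ c i • e i = 0`
with integer coefficients implies `c i • e i = 0` for each `i`. -/
def IsIndepFamily {k : ℕ} (e : Fin k → G) : Prop :=
  ∀ c : Fin k → ℤ, ∑ i, c i • e i = 0 → ∀ i, c i • e i = 0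

/-- The (classical) Davenport constant of the abelian group `G`: the smallest `ℓ` such that
every sequence over `G` of length at least `ℓ` has a nonempty zero-sum subsequence. -/
noncomputable def DavenportGroup (G : Type*) [AddCommGroup G] : ℕ :=
  sInf {ℓ | ∀ S : Multiset G, ℓ ≤ Multiset.card S → ∃ T, T ≤ S ∧ T ≠ 0 ∧ T.sum = 0}

section Aux

variable [DecidableEq G] {G₀ : Set G}

lemma mem_PMZS_iff {T : Multiset G} :
    T ∈ PMZS G₀ ↔ (∀ g ∈ T, g ∈ G₀) ∧ IsPMZeroSum T := Iff.rfl

lemma singleton_mem_PMZS {g : G} (h : ({g} : Multiset G) ∈ PMZS G₀) : g = 0 := by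
  obtain ⟨-, S₁, S₂, hsplit, hsum⟩ := mem_PMZS_iff.mp h
  have hcard : Multiset.card S₁ + Multiset.card S₂ = 1 := by
    have := congrArg Multiset.card hsplit
    simpa using this.symm
  rcases Nat.eq_zero_or_pos (Multiset.card S₁) with h1 | h1
  · have hS1 : S₁ = 0 := Multiset.card_eq_zero.mp h1
    subst hS1
    rw [zero_add] at hsplit
    rw [← hsplit] at hsum
    simpa using hsum.symm
  · have hS2 : S₂ = 0 := Multiset.card_eq_zero.mp (by omega)
    subst hS2
    rw [add_zero] at hsplit
    rw [← hsplit] at hsum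
    simpa using hsum

lemma erase_zero_mem_PMZS {A : Multiset G} (hA : A ∈ PMZS G₀) :
    A.erase 0 ∈ PMZS G₀ := by
  obtain ⟨hsub, S₁, S₂, hsplit, hsum⟩ := mem_PMZS_iff.mp hA
  refine mem_PMZS_iff.mpr ⟨fun g hg => hsub g (Multiset.mem_of_mem_erase hg), ?_⟩
  subst hsplit
  by_cases h1 : (0 : G) ∈ S₁
  · refine ⟨S₁.erase 0, S₂, ?_, ?_⟩
    · rw [Multiset.erase_add_left_pos _ h1]
    · have : (0 : G) + (S₁.erase 0).sum = S₁.sum := by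
        rw [← Multiset.sum_cons, Multiset.cons_erase h1]
      rw [← hsum, ← this, zero_add]
  · by_cases h2 : (0 : G) ∈ S₂
    · refine ⟨S₁, S₂.erase 0, ?_, ?_⟩
      · rw [Multiset.erase_add_right_pos _ h2]
      · have : (0 : G) + (S₂.erase 0).sum = S₂.sum := by
          rw [← Multiset.sum_cons, Multiset.cons_erase h2]
        rw [hsum, ← this, zero_add]
    · have h0 : (0 : G) ∉ S₁ + S₂ := by
        rw [Multiset.mem_add]; tauto
      rw [Multiset.erase_of_notMem h0]
      exact ⟨S₁, S₂, rfl, hsum⟩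

lemma atom_zero_PMZS {A : Multiset G} (hA : IsPMAtom (PMZS G₀) A) (h0 : (0 : G) ∈ A) :
    A = ({0} : Multiset G) := by
  have h0G : (0 : G) ∈ G₀ := (mem_PMZS_iff.mp hA.1).1 0 h0
  have hzmem : ({0} : Multiset G) ∈ PMZS G₀ :=
    mem_PMZS_iff.mpr ⟨fun g hg => by rw [Multiset.mem_singleton.mp hg]; exact h0G,
      {0}, 0, (add_zero _).symm, by simp⟩
  have hE : A.erase 0 ∈ PMZS G₀ := erase_zero_mem_PMZS hA.1
  have hsplit : A = ({0} : Multiset G) + A.erase 0 := by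
    rw [Multiset.singleton_add, Multiset.cons_erase h0]
  rcases hA.2.2 _ _ hzmem hE hsplit with h | h
  · exact absurd h (by simp)
  · rw [hsplit, h, add_zero]

lemma atomS_to_atomH {H S : AddSubmonoid (Multiset G)} (hdc : IsDivClosed H S)
    {A : Multiset G} (hA : IsPMAtom S A) : IsPMAtom H A := by
  obtain ⟨hAS, hA0, hmin⟩ := hA
  refine ⟨hdc.1 hAS, hA0, fun B C hB hC hBC => ?_⟩
  have hBS : B ∈ S := hdc.2 A hAS B hB ⟨C, hC, hBC⟩
  have hCS : C ∈ S := hdc.2 A hAS C hC ⟨B, hB, by rw [hBC, add_comm]⟩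
  exact hmin B C hBS hCS hBC

lemma atomH_to_atomS {H S : AddSubmonoid (Multiset G)} (hle : S ≤ H)
    {A : Multiset G} (hAS : A ∈ S) (hA : IsPMAtom H A) : IsPMAtom S A :=
  ⟨hAS, hA.2.1, fun B C hB hC => hA.2.2 B C (hle hB) (hle hC)⟩

lemma pair_eq_add (g : G) : ({g, g} : Multiset G) = {g} + {g} := by
  rw [Multiset.insert_eq_cons, Multiset.singleton_add]

lemma pair_mem_PMZS {g : G} (hg : g ∈ G₀) : ({g, g} : Multiset G) ∈ PMZS G₀ :=
  mem_PMZS_iff.mpr ⟨fun x hx => by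
      have : x = g := by simpa using hx
      rwa [this],
    {g}, {g}, pair_eq_add g, rfl⟩

lemma pair_atom_PMZS {g : G} (hg : g ∈ G₀) (hg0 : g ≠ 0) :
    IsPMAtom (PMZS G₀) ({g, g} : Multiset G) := by
  refine ⟨pair_mem_PMZS hg, by simp, fun B C hB hC hBC => ?_⟩
  by_contra hcon
  push_neg at hcon
  obtain ⟨hB0, hC0⟩ := hcon
  have hcards : Multiset.card B + Multiset.card C = 2 := by
    have := congrArg Multiset.card hBC
    simpa using this.symm
  have hBpos := Multiset.card_pos.mpr hB0
  have hCpos := Multiset.card_pos.mpr hC0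
  have hB1 : Multiset.card B = 1 := by omega
  obtain ⟨x, rfl⟩ := Multiset.card_eq_one.mp hB1
  have hx0 : x = 0 := singleton_mem_PMZS hB
  have hxg : x ∈ ({g, g} : Multiset G) := by
    rw [hBC, Multiset.mem_add]
    exact Or.inl (Multiset.mem_singleton_self x)
  have hxg' : x = g := by simpa using hxg
  exact hg0 (by rw [← hxg', hx0])

lemma atom_count_card {S : AddSubmonoid (Multiset G)}
    (hdc : IsDivClosed (PMZS G₀) S) {A : Multiset G} (hA : IsPMAtom S A)
    (h2 : Multiset.card A ≤ 2) : A.count 0 + Multiset.card A = 2 := by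
  have hAH : IsPMAtom (PMZS G₀) A := atomS_to_atomH hdc hA
  have h1 : 1 ≤ Multiset.card A := Multiset.card_pos.mpr hAH.2.1
  have hcase : Multiset.card A = 1 ∨ Multiset.card A = 2 := by omega
  rcases hcase with hc | hc
  · obtain ⟨x, rfl⟩ := Multiset.card_eq_one.mp hc
    have hx0 : x = 0 := singleton_mem_PMZS hAH.1
    subst hx0
    simp
  · have h0 : (0 : G) ∉ A := by
      intro h0
      have := atom_zero_PMZS hAH h0
      rw [this] at hc
      simp at hc
    rw [Multiset.count_eq_zero_of_notMem h0, hc]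

lemma map_pair_sum (l : List G) :
    (l.map fun g => ({g, g} : Multiset G)).sum = (↑l : Multiset G) + (↑l : Multiset G) := by
  induction l with
  | nil => simp
  | cons g t ih =>
    simp only [List.map_cons, List.sum_cons, ih]
    rw [pair_eq_add]
    have : ((g :: t : List G) : Multiset G) = {g} + (↑t : Multiset G) := by
      rw [Multiset.singleton_add]
      rfl
    rw [this]
    abel

end Aux

/-- For `H = B±(G₀)` with `D(H)` finite, every element of `Δ*(H)` is at most `D(H) - 2`. -/
theorem stmt_3 (G : Type*) [AddCommGroup G] (G₀ : Set G)
    (hfin : BddAbove (AtomLengths (PMZS G₀))) :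
    ∀ d ∈ DeltaStar (PMZS G₀), d ≤ DavD (PMZS G₀) - 2 := by
  classical
  intro d hd
  obtain ⟨S, hdc, hne, rfl⟩ := hd
  by_cases hex : ∃ A : Multiset G, IsPMAtom S A ∧ 3 ≤ Multiset.card A
  · obtain ⟨A, hAatom, hm3⟩ := hex
    have hAH : IsPMAtom (PMZS G₀) A := atomS_to_atomH hdc hAatom
    have hAS : A ∈ S := hAatom.1
    have hAAS : A + A ∈ S := add_mem hAS hAS
    set L := LengthSet S (A + A) with hLdef
    have h2L : (2 : ℕ) ∈ L := by
      refine ⟨[A, A], ?_, by simp, rfl⟩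
      intro B hB
      have hBA : B = A := by simpa using hB
      rw [hBA]; exact hAatom
    have hG0 : ∀ g ∈ A, g ∈ G₀ := (mem_PMZS_iff.mp hAH.1).1
    have hnz : ∀ g ∈ A, g ≠ 0 := by
      intro g hg hg0
      subst hg0
      have hA0 : A = ({0} : Multiset G) := atom_zero_PMZS hAH hg
      have : Multiset.card A = 1 := by rw [hA0]; simp
      omega
    have hpairS : ∀ g ∈ A, ({g, g} : Multiset G) ∈ S := by
      intro g hg
      apply hdc.2 (A + A) hAAS _ (pair_mem_PMZS (hG0 g hg))
      refine ⟨A.erase g + A.erase g, ?_, ?_⟩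
      · refine mem_PMZS_iff.mpr ⟨?_, A.erase g, A.erase g, rfl, rfl⟩
        intro x hx
        rcases Multiset.mem_add.mp hx with h | h <;>
          exact hG0 x (Multiset.mem_of_mem_erase h)
      · conv_lhs => rw [← Multiset.cons_erase hg]
        rw [pair_eq_add, ← Multiset.singleton_add]
        exact add_add_add_comm _ _ _ _
    have hmL : Multiset.card A ∈ L := by
      refine ⟨A.toList.map fun g => ({g, g} : Multiset G), ?_, ?_, ?_⟩
      · intro B hB
        obtain ⟨g, hgl, rfl⟩ := List.mem_map.mp hB
        have hg : g ∈ A := by rwa [← Multiset.mem_toList]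
        exact atomH_to_atomS hdc.1 (hpairS g hg) (pair_atom_PMZS (hG0 g hg) (hnz g hg))
      · rw [map_pair_sum, Multiset.coe_toList]
      · simp
    set T := {b ∈ L | b < Multiset.card A} with hTdef
    have h2T : 2 ∈ T := ⟨h2L, by omega⟩
    have hTbdd : BddAbove T := ⟨Multiset.card A, fun b hb => hb.2.le⟩
    have haT : sSup T ∈ T := Nat.sSup_mem ⟨2, h2T⟩ hTbdd
    have ha2 : 2 ≤ sSup T := le_csSup hTbdd h2T
    set a := sSup T with hadef
    set B := {b ∈ L | a < b} with hBdef
    have hmB : Multiset.card A ∈ B := ⟨hmL, haT.2⟩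
    have hb₀B : sInf B ∈ B := Nat.sInf_mem ⟨Multiset.card A, hmB⟩
    have hb₀m : sInf B ≤ Multiset.card A := Nat.sInf_le hmB
    set b₀ := sInf B with hb0def
    have hab : a < b₀ := hb₀B.2
    have hd₀ : (b₀ - a) ∈ DeltaM S := by
      refine ⟨A + A, hAAS, by omega, a, haT.1, ?_, ?_⟩
      · have hba : a + (b₀ - a) = b₀ := by omega
        rw [hba]; exact hb₀B.1
      · intro b hbL habb
        have : b₀ ≤ b := Nat.sInf_le ⟨hbL, habb⟩
        omega
    have h1 : sInf (DeltaM S) ≤ b₀ - a := Nat.sInf_le hd₀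
    have h2 : Multiset.card A ≤ DavD (PMZS G₀) := le_csSup hfin ⟨A, hAH, rfl⟩
    omega
  · exfalso
    push_neg at hex
    obtain ⟨d', a, haS, hpos, k, hkL, hkdL, -⟩ := hne
    have key : ∀ l : List (Multiset G), (∀ B ∈ l, IsPMAtom S B) →
        Multiset.count 0 l.sum + Multiset.card l.sum = 2 * l.length := by
      intro l
      induction l with
      | nil => intro _; simp
      | cons B t ih =>
        intro h
        have hB := h B List.mem_cons_self
        have hBeq : B.count 0 + Multiset.card B = 2 :=
          atom_count_card hdc hB (by have := hex B hB; omega)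
        have ht := ih fun C hC => h C (List.mem_cons_of_mem B hC)
        simp only [List.sum_cons, List.length_cons, Multiset.count_add, Multiset.card_add]
        omega
    obtain ⟨l₁, hl₁a, hl₁s, hl₁len⟩ := hkL
    obtain ⟨l₂, hl₂a, hl₂s, hl₂len⟩ := hkdL
    have e1 := key l₁ hl₁a
    have e2 := key l₂ hl₂a
    rw [hl₁s, hl₁len] at e1
    rw [hl₂s, hl₂len] at e2
    omega
end

section
/- Let G be an abelian group, G₀ ⊆ G \ {0} non-empty, and H = B±(G₀). If Δ(H) ≠ ∅, then min Δ(H) divides d := gcd{|A| − 2 : A an atom of H}, and d divides 2·min Δ(H). In particular, if d is odd, then min Δ(H) = d. -/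
open Multiset

variable {G : Type*} [AddCommGroup G]

set_option linter.unusedSectionVars false
set_option linter.unusedVariables false


lemma mem_length_add {H : AddSubmonoid (Multiset G)} {a b : Multiset G} {x y : ℕ}
    (hx : x ∈ LengthSet H a) (hy : y ∈ LengthSet H b) : x + y ∈ LengthSet H (a + b) := by
  obtain ⟨l, hl, hs, hlen⟩ := hx
  obtain ⟨l', hl', hs', hlen'⟩ := hy
  exact ⟨l ++ l', fun A hA => (List.mem_append.mp hA).elim (hl A) (hl' A),
    by simp [hs, hs'], by simp [hlen, hlen']⟩

lemma mem_length_nsmul {H : AddSubmonoid (Multiset G)} {a : Multiset G} {x : ℕ}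
    (hx : x ∈ LengthSet H a) (q : ℕ) : q * x ∈ LengthSet H (q • a) := by
  induction q with
  | zero => exact ⟨[], by simp, by simp, by simp⟩
  | succ n ih =>
    have := mem_length_add ih hx
    rw [succ_nsmul, Nat.succ_mul]
    exact this

lemma exists_gap {L : Set ℕ} {u w : ℕ} (hu : u ∈ L) (hw : w ∈ L) (huw : u < w) :
    ∃ g, g ∈ DistSet L ∧ 0 < g ∧ g ≤ w - u ∧ u + g ∈ L := by
  set T := {z | z ∈ L ∧ u < z} with hT
  have hTne : T.Nonempty := ⟨w, hw, huw⟩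
  have hv : sInf T ∈ T := Nat.sInf_mem hTne
  have hle : sInf T ≤ w := Nat.sInf_le ⟨hw, huw⟩
  refine ⟨sInf T - u, ⟨Nat.sub_pos_of_lt hv.2, u, hu, ?_, ?_⟩, Nat.sub_pos_of_lt hv.2,
    by omega, ?_⟩
  · rw [Nat.add_sub_cancel' hv.2.le]; exact hv.1
  · intro b hb hub
    rw [Nat.add_sub_cancel' hv.2.le]
    exact Nat.sInf_le ⟨hb, hub⟩
  · rw [Nat.add_sub_cancel' hv.2.le]; exact hv.1

lemma min_dvd_mem {H : AddSubmonoid (Multiset G)} (hΔ : (DeltaM H).Nonempty) {d : ℕ}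
    (hd : d ∈ DeltaM H) : sInf (DeltaM H) ∣ d := by
  set m := sInf (DeltaM H) with hm_def
  have hm : m ∈ DeltaM H := Nat.sInf_mem hΔ
  obtain ⟨a, ha, hmpos, x, hx, hxm, -⟩ := hm
  obtain ⟨b, hb, hdpos, y, hy, hyd, -⟩ := hd
  by_contra hndvd
  have hr : 0 < d % m := Nat.pos_of_ne_zero (fun h => hndvd (Nat.dvd_of_mod_eq_zero h))
  have hrm : d % m < m := Nat.mod_lt _ hmpos
  set q := d / m with hq
  set r := d % m with hr_def
  have hkey : m * q + r = d := Nat.div_add_mod d m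
  have h0 : q * (x + m) + y ∈ LengthSet H (q • a + b) :=
    mem_length_add (mem_length_nsmul hxm q) hy
  have h1 : q * x + (y + d) ∈ LengthSet H (q • a + b) :=
    mem_length_add (mem_length_nsmul hx q) hyd
  set P0 := q * (x + m) + y with hP0
  set P1 := q * x + (y + d) with hP1
  have hE : P0 + r = P1 := by rw [hP0, hP1, ← hkey]; ring
  have hlt : P0 < P1 := by omega
  obtain ⟨g, hgD, hgpos, hgle, -⟩ := exists_gap h0 h1 hlt
  have hgΔ : g ∈ DeltaM H := ⟨q • a + b, AddSubmonoid.add_mem _ (AddSubmonoid.nsmul_mem H ha q) hb, hgD⟩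
  have : m ≤ g := Nat.sInf_le hgΔ
  omega

lemma dvd_sub_of_mem {H : AddSubmonoid (Multiset G)} (hΔ : (DeltaM H).Nonempty)
    {a : Multiset G} (ha : a ∈ H) :
    ∀ n : ℕ, ∀ u w : ℕ, u ∈ LengthSet H a → w ∈ LengthSet H a → w - u = n →
      sInf (DeltaM H) ∣ n := by
  intro n
  induction n using Nat.strong_induction_on with
  | _ n ih =>
    intro u w hu hw hn
    rcases Nat.eq_zero_or_pos n with rfl | hpos
    · exact dvd_zero _
    · have hlt : u < w := by omega
      obtain ⟨g, hgD, hgpos, hgle, hmem⟩ := exists_gap hu hw hlt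
      have hmg : sInf (DeltaM H) ∣ g := min_dvd_mem hΔ ⟨a, ha, hgD⟩
      have hrec : sInf (DeltaM H) ∣ (w - (u + g)) :=
        ih (w - (u + g)) (by omega) (u + g) w hmem hw rfl
      have hsplit : n = g + (w - (u + g)) := by omega
      rw [hsplit]; exact Nat.dvd_add hmg hrec

lemma singleton_not_mem {G₀ : Set G} (h0 : (0 : G) ∉ G₀) (b : G) : {b} ∉ PMZS G₀ := by
  rintro ⟨hb, S₁, S₂, hS, hsum⟩
  have hb' : b ∈ G₀ := hb b (Multiset.mem_singleton_self b)
  have hcard : Multiset.card S₁ + Multiset.card S₂ = 1 := by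
    rw [← Multiset.card_add, ← hS]; simp
  rcases Nat.eq_zero_or_pos (Multiset.card S₁) with h1 | h1
  · have : S₁ = 0 := Multiset.card_eq_zero.mp h1
    subst this
    rw [zero_add] at hS
    rw [← hS] at hsum
    simp at hsum
    exact h0 (hsum ▸ hb')
  · have h2 : Multiset.card S₂ = 0 := by omega
    have : S₂ = 0 := Multiset.card_eq_zero.mp h2
    subst this
    rw [add_zero] at hS
    rw [← hS] at hsum
    simp at hsum
    exact h0 (hsum ▸ hb')

lemma atom_two_le {G₀ : Set G} (h0 : (0 : G) ∉ G₀) {A : Multiset G}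
    (hA : IsPMAtom (PMZS G₀) A) : 2 ≤ Multiset.card A := by
  obtain ⟨hAH, hA0, -⟩ := hA
  by_contra h
  interval_cases hc : Multiset.card A
  · exact hA0 (Multiset.card_eq_zero.mp hc)
  · obtain ⟨b, rfl⟩ := Multiset.card_eq_one.mp hc
    exact singleton_not_mem h0 b hAH

lemma pair_atom {G₀ : Set G} (h0 : (0 : G) ∉ G₀) {g : G} (hg : g ∈ G₀) :
    IsPMAtom (PMZS G₀) {g, g} := by
  refine ⟨⟨by intro x hx; simp at hx; simp [hx, hg], {g}, {g}, ?_, rfl⟩, by simp, ?_⟩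
  · rfl
  · intro B C hB hC hBC
    by_contra h
    push_neg at h
    obtain ⟨hB0, hC0⟩ := h
    have hcard : Multiset.card B + Multiset.card C = 2 := by
      rw [← Multiset.card_add, ← hBC]; rfl
    have hB1 : Multiset.card B = 1 := by
      have := Multiset.card_pos.mpr hB0
      have := Multiset.card_pos.mpr hC0
      omega
    obtain ⟨b, rfl⟩ := Multiset.card_eq_one.mp hB1
    exact singleton_not_mem h0 b hB

lemma double_factor {G₀ : Set G} (h0 : (0 : G) ∉ G₀) (A : Multiset G)
    (hA : ∀ g ∈ A, g ∈ G₀) :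
    ∃ l : List (Multiset G), (∀ B ∈ l, IsPMAtom (PMZS G₀) B) ∧ l.sum = A + A ∧
      l.length = Multiset.card A := by
  induction A using Multiset.induction_on with
  | empty => exact ⟨[], by simp, by simp, by simp⟩
  | cons g A ih =>
    obtain ⟨l, h1, h2, h3⟩ := ih (fun x hx => hA x (Multiset.mem_cons_of_mem hx))
    refine ⟨{g, g} :: l, ?_, ?_, by simp [h3]⟩
    · intro B hB
      rcases List.mem_cons.mp hB with rfl | hB
      · exact pair_atom h0 (hA g (Multiset.mem_cons_self _ _))
      · exact h1 B hB
    · rw [List.sum_cons, h2]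
      show ({g} : Multiset G) + {g} + (A + A) = (g ::ₘ A) + (g ::ₘ A)
      simp [← Multiset.singleton_add]
      abel

lemma atom_len_dvd {G₀ : Set G} (h0 : (0 : G) ∉ G₀) (hΔ : (DeltaM (PMZS G₀)).Nonempty)
    {A : Multiset G} (hA : IsPMAtom (PMZS G₀) A) :
    ((sInf (DeltaM (PMZS G₀)) : ℕ) : ℤ) ∣ (Multiset.card A : ℤ) - 2 := by
  have hAH := hA.1
  have hG₀ : ∀ g ∈ A, g ∈ G₀ := hAH.1
  have h2 : 2 ∈ LengthSet (PMZS G₀) (A + A) :=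
    ⟨[A, A], by simp [hA], by simp, rfl⟩
  obtain ⟨l, hl1, hl2, hl3⟩ := double_factor h0 A hG₀
  have hℓ : Multiset.card A ∈ LengthSet (PMZS G₀) (A + A) := ⟨l, hl1, hl2, hl3⟩
  have hge : 2 ≤ Multiset.card A := atom_two_le h0 hA
  have hdvd : sInf (DeltaM (PMZS G₀)) ∣ (Multiset.card A - 2) :=
    dvd_sub_of_mem hΔ (AddSubmonoid.add_mem _ hAH hAH) _ 2 (Multiset.card A) h2 hℓ rfl
  have := Int.natCast_dvd_natCast.mpr hdvd
  rwa [Nat.cast_sub hge] at this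

lemma len_congr {G₀ : Set G} {d : ℕ}
    (hd1 : ∀ x ∈ {x : ℤ | ∃ A : Multiset G,
        IsPMAtom (PMZS G₀) A ∧ x = (Multiset.card A : ℤ) - 2}, (d : ℤ) ∣ x)
    {a : Multiset G} {k : ℕ} (hk : k ∈ LengthSet (PMZS G₀) a) :
    (d : ℤ) ∣ (Multiset.card a : ℤ) - 2 * k := by
  obtain ⟨l, hl, rfl, rfl⟩ := hk
  induction l with
  | nil => simp
  | cons A l ih =>
    have h1 : (d : ℤ) ∣ (Multiset.card A : ℤ) - 2 :=
      hd1 _ ⟨A, hl A List.mem_cons_self, rfl⟩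
    have h2 := ih (fun B hB => hl B (List.mem_cons_of_mem _ hB))
    have he : (Multiset.card (A :: l).sum : ℤ) - 2 * ((A :: l).length) =
        ((Multiset.card A : ℤ) - 2) + ((Multiset.card l.sum : ℤ) - 2 * l.length) := by
      rw [List.sum_cons, Multiset.card_add, List.length_cons]
      push_cast
      ring
    rw [he]
    exact dvd_add h1 h2


/-- For `G₀ ⊆ G \ {0}` nonempty, `H = B±(G₀)` with `Δ(H) ≠ ∅`, and
`d = gcd {|A| - 2 : A atom of H}`: `min Δ(H) ∣ d`, `d ∣ 2 · min Δ(H)`, and if `d` is odd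
then `min Δ(H) = d`. -/
theorem stmt_4 (G : Type*) [AddCommGroup G] (G₀ : Set G) (h0 : (0 : G) ∉ G₀)
    (hne : G₀.Nonempty) (hΔ : (DeltaM (PMZS G₀)).Nonempty) (d : ℕ)
    (hd : IsSetGCD {x : ℤ | ∃ A : Multiset G,
        IsPMAtom (PMZS G₀) A ∧ x = (Multiset.card A : ℤ) - 2} d) :
    sInf (DeltaM (PMZS G₀)) ∣ d ∧ d ∣ 2 * sInf (DeltaM (PMZS G₀)) ∧
      (Odd d → sInf (DeltaM (PMZS G₀)) = d) := by

  set m := sInf (DeltaM (PMZS G₀)) with hm_def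
  have hmdvd : m ∣ d := by
    refine hd.2 m ?_
    rintro x ⟨A, hA, rfl⟩
    exact atom_len_dvd h0 hΔ hA
  have hm : m ∈ DeltaM (PMZS G₀) := Nat.sInf_mem hΔ
  obtain ⟨a, ha, hmpos, k, hk, hkm, -⟩ := hm
  have h1 := len_congr hd.1 hk
  have h2 := len_congr hd.1 hkm
  have hdvd2 : (d : ℤ) ∣ 2 * m := by
    have h3 := dvd_sub h2 h1
    have he : ((Multiset.card a : ℤ) - 2 * ↑(k + m)) - ((Multiset.card a : ℤ) - 2 * k)
        = -(2 * m) := by push_cast; ring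
    rw [he] at h3
    exact (dvd_neg.mp h3)
  have hdn : d ∣ 2 * m := by exact_mod_cast hdvd2
  refine ⟨hmdvd, hdn, fun hodd => ?_⟩
  have hcop : Nat.Coprime d 2 := Nat.coprime_two_right.mpr hodd
  have hdm : d ∣ m := by
    rw [mul_comm] at hdn
    exact hcop.dvd_of_dvd_mul_right hdn
  exact Nat.dvd_antisymm hmdvd hdm
end
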